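/- Let n, m ∈ ℕ, let P ∈ ℚ[X] be palindromic of degree 2n and R ∈ ℚ[X] palindromic of degree 2m (i.e. t^{2n}P(1/t) = P(t) and t^{2m}R(1/t) = R(t) for all real t ≠ 0). For real t ∉ {0,1} with P(t) ≠ 0, R(t) ≠ 0, set I(t) := (1+t)/(1−t) + t·P'(t)/P(t) − n and δ̂(t) := t^{−m}R(t). Fix an integer k ≥ 1. For nonzero reals x, y with z := 1/(xy), assume x, y, z ∉ {1} and P and R do not vanish at x, y, z, and define Q_k(x,y) := Σ over the six permutations (u,v,w) of the triple (x,y,z) of (u^k − u^{−k})/δ̂(u) · I(v). Then Q_k(1/x, 1/y) = Q_k(x, y) (note that the inverted triple is (1/x, 1/y, 1/z) and (1/x)(1/y)(1/z) = 1). -/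

import Mathlib

open Polynomial

noncomputable section

/-- `I(t) = (1+t)/(1-t) + t·P'(t)/P(t) - n`. -/
def Ifun (n : ℕ) (P : ℚ[X]) (t : ℝ) : ℝ :=
  (1 + t) / (1 - t) +
    t * Polynomial.aeval t (Polynomial.derivative P) / Polynomial.aeval t P - (n : ℝ)

/-- `δ̂(t) = t^{-m}·R(t)`. -/
def deltaHat (m : ℕ) (R : ℚ[X]) (t : ℝ) : ℝ :=
  t ^ (-(m : ℤ)) * Polynomial.aeval t R

/-- `Q_k(x,y)`: the sum over the six permutations `(u,v,w)` of the triple `(x,y,z)`,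
`z = 1/(xy)`, of `(u^k - u^{-k})/δ̂(u) · I(v)`. -/
def Qfun (n m : ℕ) (P R : ℚ[X]) (k : ℕ) (x y : ℝ) : ℝ :=
  (x ^ (k : ℤ) - x ^ (-(k : ℤ))) / deltaHat m R x * Ifun n P y +
  (x ^ (k : ℤ) - x ^ (-(k : ℤ))) / deltaHat m R x * Ifun n P (x * y)⁻¹ +
  (y ^ (k : ℤ) - y ^ (-(k : ℤ))) / deltaHat m R y * Ifun n P x +
  (y ^ (k : ℤ) - y ^ (-(k : ℤ))) / deltaHat m R y * Ifun n P (x * y)⁻¹ +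
  ((x * y)⁻¹ ^ (k : ℤ) - (x * y)⁻¹ ^ (-(k : ℤ))) / deltaHat m R (x * y)⁻¹ * Ifun n P x +
  ((x * y)⁻¹ ^ (k : ℤ) - (x * y)⁻¹ ^ (-(k : ℤ))) / deltaHat m R (x * y)⁻¹ * Ifun n P y


private lemma pal_deriv (N : ℕ) (p : ℝ[X])
    (hpal : ∀ t : ℝ, t ≠ 0 → t ^ N * p.eval t⁻¹ = p.eval t)
    (t : ℝ) (ht : t ≠ 0) :
    p.derivative.eval t
      = (N : ℝ) * t ^ N * t⁻¹ * p.eval t⁻¹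
        + t ^ N * (p.derivative.eval t⁻¹ * (-(t ^ 2)⁻¹)) := by
  have hinv : HasDerivAt (fun s : ℝ => p.eval s⁻¹)
      (p.derivative.eval t⁻¹ * (-(t ^ 2)⁻¹)) t :=
    (p.hasDerivAt t⁻¹).comp t (hasDerivAt_inv ht)
  have hF : HasDerivAt (fun s : ℝ => s ^ N * p.eval s⁻¹)
      ((N : ℝ) * t ^ (N - 1) * p.eval t⁻¹
        + t ^ N * (p.derivative.eval t⁻¹ * (-(t ^ 2)⁻¹))) t :=
    (hasDerivAt_pow N t).mul hinv
  have heq : (fun s : ℝ => s ^ N * p.eval s⁻¹) =ᶠ[nhds t] fun s => p.eval s := by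
    filter_upwards [IsOpen.mem_nhds isOpen_compl_singleton ht] with s hs
    exact hpal s hs
  have hG : HasDerivAt (fun s : ℝ => p.eval s)
      ((N : ℝ) * t ^ (N - 1) * p.eval t⁻¹
        + t ^ N * (p.derivative.eval t⁻¹ * (-(t ^ 2)⁻¹))) t :=
    hF.congr_of_eventuallyEq heq.symm
  have huniq := hG.unique (p.hasDerivAt t)
  rw [← huniq]
  congr 1
  rcases N with _ | N
  · simp
  · rw [Nat.succ_sub_one]
    have h : t ^ N = t ^ (N + 1) * t⁻¹ := by field_simp [pow_succ]; ring
    rw [h]; ring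

private lemma Ifun_inv (n : ℕ) (P : ℚ[X])
    (hpal : ∀ t : ℝ, t ≠ 0 → t ^ (2 * n) * Polynomial.aeval t⁻¹ P = Polynomial.aeval t P)
    (t : ℝ) (ht : t ≠ 0) (ht1 : t ≠ 1) (hP : Polynomial.aeval t P ≠ (0 : ℝ)) :
    Ifun n P t⁻¹ = -Ifun n P t := by
  unfold Ifun
  set p : ℝ[X] := P.map (algebraMap ℚ ℝ) with hp
  have hev : ∀ s : ℝ, Polynomial.aeval s P = p.eval s := by
    intro s; rw [hp, Polynomial.eval_map, Polynomial.aeval_def]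
  have hev' : ∀ s : ℝ, Polynomial.aeval s (Polynomial.derivative P) = p.derivative.eval s := by
    intro s; rw [hp, Polynomial.derivative_map, Polynomial.eval_map, Polynomial.aeval_def]
  simp only [hev, hev']
  have hpal' : ∀ s : ℝ, s ≠ 0 → s ^ (2 * n) * p.eval s⁻¹ = p.eval s := by
    intro s hs; rw [← hev, ← hev]; exact hpal s hs
  have hA : p.eval t ≠ 0 := by rw [← hev]; exact hP
  have hB : p.eval t⁻¹ ≠ 0 := by
    intro h; apply hA; rw [← hpal' t ht, h, mul_zero]
  have hder := pal_deriv (2 * n) p hpal' t ht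
  have hAB := hpal' t ht
  have ht1' : (1 : ℝ) - t ≠ 0 := sub_ne_zero.mpr (Ne.symm ht1)
  have htinv1 : (1 : ℝ) - t⁻¹ ≠ 0 := by
    rw [sub_ne_zero]; intro h
    apply ht1; rw [← inv_inv t, ← h, inv_one]
  have hm1' : -(1 - t) ≠ 0 := neg_ne_zero.mpr ht1'
  have h1 : (1 + t⁻¹) / (1 - t⁻¹) = -((1 + t) / (1 - t)) := by
    rw [← div_neg, div_eq_div_iff htinv1 hm1']
    linear_combination (2 : ℝ) * mul_inv_cancel₀ ht
  have h2 : t⁻¹ * p.derivative.eval t⁻¹ / p.eval t⁻¹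
      = 2 * n - t * p.derivative.eval t / p.eval t := by
    have key : t⁻¹ * p.derivative.eval t⁻¹ * p.eval t
        = (2 * (n : ℝ) * p.eval t - t * p.derivative.eval t) * p.eval t⁻¹ := by
      rw [hder, ← hAB]
      field_simp
      push_cast
      ring
    have hr : 2 * (n : ℝ) - t * p.derivative.eval t / p.eval t
        = (2 * (n : ℝ) * p.eval t - t * p.derivative.eval t) / p.eval t := by
      rw [eq_div_iff hA, sub_mul, div_mul_cancel₀ _ hA]
    rw [hr, div_eq_div_iff hB hA]
    exact key
  rw [h1, h2]
  ring

private lemma deltaHat_inv (m : ℕ) (R : ℚ[X])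
    (hpal : ∀ t : ℝ, t ≠ 0 → t ^ (2 * m) * Polynomial.aeval t⁻¹ R = Polynomial.aeval t R)
    (t : ℝ) (ht : t ≠ 0) : deltaHat m R t⁻¹ = deltaHat m R t := by
  unfold deltaHat
  rw [← hpal t ht]
  have h1 : (t⁻¹ : ℝ) ^ (-(m : ℤ)) = t ^ (m : ℤ) := by
    rw [inv_zpow, ← zpow_neg, neg_neg]
  have h2 : (t : ℝ) ^ (-(m : ℤ)) * t ^ (2 * m) = t ^ (m : ℤ) := by
    rw [← zpow_natCast t (2 * m), ← zpow_add₀ ht]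
    congr 1
    push_cast
    ring
  rw [h1, ← mul_assoc, h2]

private lemma zpow_inv_sub (u : ℝ) (k : ℕ) :
    (u⁻¹) ^ (k : ℤ) - (u⁻¹) ^ (-(k : ℤ)) = -(u ^ (k : ℤ) - u ^ (-(k : ℤ))) := by
  rw [inv_zpow, inv_zpow, ← zpow_neg, ← zpow_neg, neg_neg]
  ring

/-- If `P` is palindromic of degree `2n` and `R` is palindromic of degree `2m`, then for
`k ≥ 1` and nonzero reals `x, y` with `z = 1/(xy)`, none of `x, y, z` equal to `1` and `P`, `R`
nonvanishing at `x, y, z`, one has `Q_k(1/x, 1/y) = Q_k(x, y)`. -/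
theorem Qk_invariant_under_inversion (n m : ℕ) (P R : ℚ[X])
    (hpalP : ∀ t : ℝ, t ≠ 0 →
      t ^ (2 * n) * Polynomial.aeval t⁻¹ P = Polynomial.aeval t P)
    (hpalR : ∀ t : ℝ, t ≠ 0 →
      t ^ (2 * m) * Polynomial.aeval t⁻¹ R = Polynomial.aeval t R)
    (k : ℕ) (hk : 1 ≤ k) (x y : ℝ) (hx : x ≠ 0) (hy : y ≠ 0)
    (hx1 : x ≠ 1) (hy1 : y ≠ 1) (hz1 : (x * y)⁻¹ ≠ 1)
    (hPx : Polynomial.aeval x P ≠ (0 : ℝ)) (hPy : Polynomial.aeval y P ≠ (0 : ℝ))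
    (hPz : Polynomial.aeval (x * y)⁻¹ P ≠ (0 : ℝ))
    (hRx : Polynomial.aeval x R ≠ (0 : ℝ)) (hRy : Polynomial.aeval y R ≠ (0 : ℝ))
    (hRz : Polynomial.aeval (x * y)⁻¹ R ≠ (0 : ℝ)) :
    Qfun n m P R k x⁻¹ y⁻¹ = Qfun n m P R k x y := by
  have hz0 : (x * y)⁻¹ ≠ 0 := inv_ne_zero (mul_ne_zero hx hy)
  have hIx := Ifun_inv n P hpalP x hx hx1 hPx
  have hIy := Ifun_inv n P hpalP y hy hy1 hPy
  have hIz := Ifun_inv n P hpalP ((x * y)⁻¹) hz0 hz1 hPz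
  have hDx := deltaHat_inv m R hpalR x hx
  have hDy := deltaHat_inv m R hpalR y hy
  have hDz := deltaHat_inv m R hpalR ((x * y)⁻¹) hz0
  have hxy : (x⁻¹ * y⁻¹) = ((x * y)⁻¹) := (mul_inv x y).symm
  unfold Qfun
  rw [hxy, hIx, hIy, hIz, hDx, hDy, hDz, zpow_inv_sub x k, zpow_inv_sub y k,
    zpow_inv_sub ((x * y)⁻¹) k]
  ring
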